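/- Let (A, E_A) and (B, E_B) be filtered C*-probability spaces, let M : ℝ≥0 → L²(A,E_A) be a right-continuous L²-martingale, and let H = 1_{{0}}H₀ + Σ_{i=1}^k 1_{(s_i,t_i]}H_i be an elementary predictable process, where each H_i is a bounded real-linear map L²(E_A) → L²(E_B) satisfying the adaptedness condition: for u ≥ s_i, E_B[H_i x | B_u] = H_i E_A[x | A_u] for all x ∈ L²(E_A). Then the stochastic integral ∫₀^∞ H[dM] = Σᵢ H_i[M(t_i) - M(s_i)] satisfies ‖∫₀^∞ H[dM]‖₂² ≤ ∫_{(0,∞)} ‖H(t)‖²_{op} κ_M(dt), where κ_M is the measure with κ_M((s,t]) = ‖M(t)-M(s)‖₂² and ‖H(t)‖_op is the operator norm of H(t) : L² → L². -/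

import Mathlib

open scoped NNReal ENNReal
open MeasureTheory

private lemma norm_sq_sum_of_pairwise_orthogonal {E : Type*} [NormedAddCommGroup E]
    [InnerProductSpace ℂ E] {ι : Type*} (F : Finset ι) (f : ι → E)
    (h : ∀ i ∈ F, ∀ j ∈ F, i ≠ j → (inner ℂ (f i) (f j) : ℂ) = 0) :
    ‖∑ i ∈ F, f i‖ ^ 2 = ∑ i ∈ F, ‖f i‖ ^ 2 := by
  have key : (inner ℂ (∑ i ∈ F, f i) (∑ j ∈ F, f j) : ℂ) = ∑ i ∈ F, (inner ℂ (f i) (f i) : ℂ) := by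
    rw [sum_inner]
    refine Finset.sum_congr rfl fun i hi => ?_
    rw [inner_sum]
    exact Finset.sum_eq_single i (fun j hj hji => h i hi j hj (Ne.symm hji))
      (fun hni => absurd hi hni)
  have h1 : ‖∑ i ∈ F, f i‖ ^ 2 = RCLike.re (inner ℂ (∑ i ∈ F, f i) (∑ j ∈ F, f j) : ℂ) :=
    (inner_self_eq_norm_sq _).symm
  rw [h1, key, map_sum]
  exact Finset.sum_congr rfl fun i _ => inner_self_eq_norm_sq _

/-- **Noncommutative Itô contraction for elementary predictable integrands**
(Theorem `thm.Itocont`).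
Setting: two filtered C*-probability spaces `(A, (A_t), E_A)` and `(B, (B_t), E_B)`; we model
their noncommutative `L²`-spaces as complex Hilbert spaces `HA = L²(E_A)` and `HB = L²(E_B)`,
with the filtrations inducing the monotone families of closed subspaces `VA t = L²(A_t,E_A)`
and `VB t = L²(B_t,E_B)`, and the conditional expectations acting on `L²` as the orthogonal
projections onto these subspaces.  `M` is a right-continuous `L²`-martingale, `κ` is its
associated measure (`κ ((s,t]) = ‖M t - M s‖₂²`), and
`H = 1_{{0}} H₀ + ∑ i, 1_{(sᵢ,tᵢ]} Hᵢ` is an elementary predictable process: each `Hᵢ` is a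
bounded real-linear map `L²(E_A) → L²(E_B)` intertwining the conditional expectations from
time `sᵢ` on (and `H₀` from time `0` on).  Then
`‖∑ i, Hᵢ (M tᵢ - M sᵢ)‖₂² ≤ ∫_(0,∞) ‖H(u)‖_op² κ(du)`. -/
theorem elementary_ito_contraction
    {HA HB : Type*} [NormedAddCommGroup HA] [InnerProductSpace ℂ HA]
    [NormedAddCommGroup HB] [InnerProductSpace ℂ HB]
    (VA : ℝ≥0 → Submodule ℂ HA) (hVA : Monotone VA) [∀ u, CompleteSpace (VA u)]
    (VB : ℝ≥0 → Submodule ℂ HB) (hVB : Monotone VB) [∀ u, CompleteSpace (VB u)]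
    (M : ℝ≥0 → HA)
    (hmart : ∀ s t : ℝ≥0, s ≤ t → (Submodule.orthogonalProjectionOnto (VA s) (M t) : HA) = M s)
    (hrc : ∀ t : ℝ≥0, ContinuousWithinAt M (Set.Ici t) t)
    (κ : Measure ℝ≥0)
    (hκ : ∀ s t : ℝ≥0, s ≤ t → κ (Set.Ioc s t) = ENNReal.ofReal (‖M t - M s‖ ^ 2))
    (k : ℕ) (s t : Fin k → ℝ≥0) (hst : ∀ i, s i ≤ t i)
    (H0 : HA →L[ℝ] HB) (Hc : Fin k → (HA →L[ℝ] HB))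
    (hH0 : ∀ u : ℝ≥0, ∀ x : HA,
      (Submodule.orthogonalProjectionOnto (VB u) (H0 x) : HB) = H0 (Submodule.orthogonalProjectionOnto (VA u) x))
    (hHc : ∀ (i : Fin k) (u : ℝ≥0), s i ≤ u → ∀ x : HA,
      (Submodule.orthogonalProjectionOnto (VB u) (Hc i x) : HB) = Hc i (Submodule.orthogonalProjectionOnto (VA u) x)) :
    ENNReal.ofReal (‖∑ i : Fin k, Hc i (M (t i) - M (s i))‖ ^ 2) ≤
      ∫⁻ u in Set.Ioi (0 : ℝ≥0),
        ENNReal.ofReal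
          (‖(Set.indicator {0} (fun _ => H0) u +
              ∑ i : Fin k, Set.indicator (Set.Ioc (s i) (t i)) (fun _ => Hc i) u :
              HA →L[ℝ] HB)‖ ^ 2) ∂κ := by
  classical
  rcases Nat.eq_zero_or_pos k with hk | hk
  · subst hk; simp
  -- the grid of all endpoints
  set F : Finset ℝ≥0 := Finset.univ.image s ∪ Finset.univ.image t with hF
  set n : ℕ := F.card with hn
  have hmemS : ∀ i, s i ∈ F := fun i =>
    Finset.mem_union_left _ (Finset.mem_image_of_mem s (Finset.mem_univ i))
  have hmemT : ∀ i, t i ∈ F := fun i =>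
    Finset.mem_union_right _ (Finset.mem_image_of_mem t (Finset.mem_univ i))
  have hn0 : 0 < n := Finset.card_pos.mpr ⟨s ⟨0, hk⟩, hmemS ⟨0, hk⟩⟩
  set e : Fin n ≃o F := F.orderIsoOfFin hn.symm with he
  set g : ℕ → ℝ≥0 := fun j => ((e ⟨min j (n - 1), by omega⟩ : F) : ℝ≥0) with hg
  have hg_mono : Monotone g := by
    intro j j' hjj
    exact Subtype.coe_le_coe.mpr (e.monotone (by simp only [Fin.mk_le_mk]; omega))
  have hgg : ∀ p q : ℕ, p ≤ n - 1 → q ≤ n - 1 → (g p ≤ g q ↔ p ≤ q) := by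
    intro p q hp hq
    simp only [hg, Subtype.coe_le_coe, e.le_iff_le, Fin.mk_le_mk]
    omega
  -- indices of the endpoints in the grid
  set a : Fin k → ℕ := fun i => ((e.symm ⟨s i, hmemS i⟩ : Fin n) : ℕ) with ha
  set b : Fin k → ℕ := fun i => ((e.symm ⟨t i, hmemT i⟩ : Fin n) : ℕ) with hb
  have ha_lt : ∀ i, a i < n := fun i => (e.symm ⟨s i, hmemS i⟩).is_lt
  have hb_lt : ∀ i, b i < n := fun i => (e.symm ⟨t i, hmemT i⟩).is_lt
  have hga : ∀ i, g (a i) = s i := by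
    intro i
    have h1 : (⟨min (a i) (n - 1), by omega⟩ : Fin n) = e.symm ⟨s i, hmemS i⟩ := by
      ext
      show min (a i) (n - 1) = a i
      have := ha_lt i
      omega
    show ((e ⟨min (a i) (n - 1), by omega⟩ : F) : ℝ≥0) = s i
    rw [h1, e.apply_symm_apply]
  have hgb : ∀ i, g (b i) = t i := by
    intro i
    have h1 : (⟨min (b i) (n - 1), by omega⟩ : Fin n) = e.symm ⟨t i, hmemT i⟩ := by
      ext
      show min (b i) (n - 1) = b i
      have := hb_lt i
      omega
    show ((e ⟨min (b i) (n - 1), by omega⟩ : F) : ℝ≥0) = t i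
    rw [h1, e.apply_symm_apply]
  have hab : ∀ i, a i ≤ b i := fun i =>
    e.symm.monotone (Subtype.mk_le_mk.mpr (hst i))
  -- the refined integrand
  set fs : ℕ → Finset (Fin k) :=
    fun j => Finset.univ.filter (fun i => s i ≤ g j ∧ g (j + 1) ≤ t i) with hfs
  set Gop : ℕ → HA →L[ℝ] HB := fun j => ∑ i ∈ fs j, Hc i with hGopdef
  set Δ : ℕ → HA := fun j => M (g (j + 1)) - M (g j) with hΔ
  set y : ℕ → HB := fun j => Gop j (Δ j) with hy
  -- reindexing the elementary integral on the refined grid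
  have key1 : ∀ i, (Finset.range (n - 1)).filter (fun j => s i ≤ g j ∧ g (j + 1) ≤ t i)
      = Finset.Ico (a i) (b i) := by
    intro i
    ext j
    simp only [Finset.mem_filter, Finset.mem_range, Finset.mem_Ico]
    have hai := ha_lt i
    have hbi := hb_lt i
    constructor
    · rintro ⟨hj, h1, h2⟩
      refine ⟨(hgg (a i) j (by omega) (by omega)).mp (by rw [hga]; exact h1), ?_⟩
      have := (hgg (j + 1) (b i) (by omega) (by omega)).mp (by rw [hgb]; exact h2)
      omega
    · rintro ⟨h1, h2⟩
      have hj : j < n - 1 := by omega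
      refine ⟨hj, ?_, ?_⟩
      · rw [← hga i]; exact (hgg (a i) j (by omega) (by omega)).mpr h1
      · rw [← hgb i]; exact (hgg (j + 1) (b i) (by omega) (by omega)).mpr (by omega)
  have tel : ∀ i, ∑ j ∈ Finset.Ico (a i) (b i), Δ j = M (t i) - M (s i) := by
    intro i
    rw [hΔ]
    rw [Finset.sum_Ico_eq_sub _ (hab i), Finset.sum_range_sub (fun j => M (g j)),
      Finset.sum_range_sub (fun j => M (g j)), hga, hgb]
    abel
  have stepA : ∑ i : Fin k, Hc i (M (t i) - M (s i))
      = ∑ j ∈ Finset.range (n - 1), y j := by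
    have h1 : ∀ j, y j = ∑ i : Fin k,
        if s i ≤ g j ∧ g (j + 1) ≤ t i then Hc i (Δ j) else 0 := by
      intro j
      rw [hy]
      simp only [hGopdef, ContinuousLinearMap.sum_apply, hfs]
      rw [Finset.sum_filter]
    simp only [h1]
    rw [Finset.sum_comm]
    refine Finset.sum_congr rfl fun i _ => ?_
    rw [← Finset.sum_filter, key1 i, ← map_sum, tel i]
  -- adaptedness of the refined coefficients
  have hGop : ∀ (j : ℕ) (u : ℝ≥0), g j ≤ u → ∀ x : HA,
      (Submodule.orthogonalProjectionOnto (VB u) (Gop j x) : HB)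
        = Gop j (Submodule.orthogonalProjectionOnto (VA u) x) := by
    intro j u hu x
    simp only [hGopdef, ContinuousLinearMap.sum_apply, map_sum]
    push_cast
    refine Finset.sum_congr rfl fun i hi => ?_
    exact hHc i u (le_trans (Finset.mem_filter.mp hi).2.1 hu) x
  have hMmem : ∀ p q : ℝ≥0, p ≤ q → M p ∈ VA q := fun p q h =>
    hVA h (Submodule.starProjection_eq_self_iff.mp (hmart p p le_rfl))
  -- orthogonality of the increments
  have horthlt : ∀ j l : ℕ, j < l → (inner ℂ (y j) (y l) : ℂ) = 0 := by
    intro j l hjl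
    have hjl1 : j + 1 ≤ l := hjl
    have hyj : y j ∈ VB (g l) := by
      rw [← Submodule.starProjection_eq_self_iff]
      have h1 : (Submodule.orthogonalProjectionOnto (VA (g l)) (Δ j) : HA) = Δ j := by
        refine Submodule.starProjection_eq_self_iff.mpr ?_
        exact Submodule.sub_mem _ (hMmem _ _ (hg_mono hjl1))
          (hMmem _ _ (hg_mono (le_of_lt hjl)))
      calc (Submodule.orthogonalProjectionOnto (VB (g l)) (y j) : HB)
          = Gop j (Submodule.orthogonalProjectionOnto (VA (g l)) (Δ j)) :=
            hGop j (g l) (hg_mono (le_of_lt hjl)) (Δ j)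
        _ = y j := by rw [h1]
    have hyl : y l ∈ (VB (g l))ᗮ := by
      rw [← Submodule.orthogonalProjectionOnto_eq_zero_iff]
      have h2 : (Submodule.orthogonalProjectionOnto (VA (g l)) (Δ l) : HA) = 0 := by
        rw [hΔ]
        simp only [map_sub]
        push_cast
        rw [hmart (g l) (g (l + 1)) (hg_mono (Nat.le_succ l)),
          (show (Submodule.orthogonalProjectionOnto (VA (g l)) (M (g l)) : HA) = M (g l) from
            Submodule.starProjection_eq_self_iff.mpr (hMmem (g l) (g l) le_rfl)), sub_self]
      have h3 : (Submodule.orthogonalProjectionOnto (VB (g l)) (y l) : HB) = 0 := by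
        rw [hGop l (g l) le_rfl (Δ l), h2, map_zero]
      exact ZeroMemClass.coe_eq_zero.mp h3
    exact Submodule.inner_right_of_mem_orthogonal hyj hyl
  have pyth : ‖∑ j ∈ Finset.range (n - 1), y j‖ ^ 2
      = ∑ j ∈ Finset.range (n - 1), ‖y j‖ ^ 2 := by
    refine norm_sq_sum_of_pairwise_orthogonal _ _ fun j _ l _ hjl => ?_
    rcases lt_or_gt_of_ne hjl with h | h
    · exact horthlt j l h
    · exact inner_eq_zero_symm.mp (horthlt l j h)
  -- the integrand is constant on each refined interval
  have hconst : ∀ j ∈ Finset.range (n - 1), ∀ u ∈ Set.Ioc (g j) (g (j + 1)),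
      (Set.indicator {0} (fun _ => H0) u +
        ∑ i : Fin k, Set.indicator (Set.Ioc (s i) (t i)) (fun _ => Hc i) u :
        HA →L[ℝ] HB) = Gop j := by
    intro j _ u hu
    obtain ⟨hu1, hu2⟩ := hu
    have hu0 : u ∉ ({0} : Set ℝ≥0) := by
      simp only [Set.mem_singleton_iff]
      exact (lt_of_le_of_lt zero_le hu1).ne'
    rw [Set.indicator_of_notMem hu0, zero_add]
    have hterm : ∀ i : Fin k, Set.indicator (Set.Ioc (s i) (t i)) (fun _ => Hc i) u
        = if s i ≤ g j ∧ g (j + 1) ≤ t i then Hc i else 0 := by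
      intro i
      by_cases hcond : s i ≤ g j ∧ g (j + 1) ≤ t i
      · rw [if_pos hcond, Set.indicator_of_mem]
        exact ⟨lt_of_le_of_lt hcond.1 hu1, le_trans hu2 hcond.2⟩
      · rw [if_neg hcond, Set.indicator_of_notMem]
        intro hmem
        apply hcond
        constructor
        · by_contra hcon
          push_neg at hcon
          have h1 : j < a i := by
            by_contra h
            push_neg at h
            exact absurd (by rw [← hga i]; exact hg_mono h) (not_le.mpr hcon)
          have h2 : g (j + 1) ≤ s i := by rw [← hga i]; exact hg_mono h1
          exact absurd (lt_of_lt_of_le (lt_of_lt_of_le hmem.1 hu2) h2) (lt_irrefl _)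
        · have h1 : j < b i := by
            by_contra h
            push_neg at h
            have : t i ≤ g j := by rw [← hgb i]; exact hg_mono h
            exact absurd (lt_of_lt_of_le hu1 (le_trans hmem.2 this)) (lt_irrefl _)
          rw [← hgb i]
          exact hg_mono h1
    simp only [hterm, hGopdef, hfs]
    exact (Finset.sum_filter _ _).symm
  -- assembling the estimate
  have hdisj : Set.PairwiseDisjoint (↑(Finset.range (n - 1)))
      (fun j => Set.Ioc (g j) (g (j + 1))) := by
    intro j _ l _ hjl
    have key : ∀ p q : ℕ, p < q →
        Disjoint (Set.Ioc (g p) (g (p + 1))) (Set.Ioc (g q) (g (q + 1))) := by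
      intro p q hpq
      refine Set.disjoint_left.mpr fun u hu1 hu2 => ?_
      exact absurd (le_trans hu1.2 (hg_mono hpq)) (not_le.mpr hu2.1)
    rcases lt_or_gt_of_ne hjl with h | h
    · exact key j l h
    · exact (key l j h).symm
  calc ENNReal.ofReal (‖∑ i : Fin k, Hc i (M (t i) - M (s i))‖ ^ 2)
      = ∑ j ∈ Finset.range (n - 1), ENNReal.ofReal (‖y j‖ ^ 2) := by
        rw [stepA, pyth, ENNReal.ofReal_sum_of_nonneg (fun _ _ => sq_nonneg _)]
    _ ≤ ∑ j ∈ Finset.range (n - 1),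
        ENNReal.ofReal (‖Gop j‖ ^ 2) * κ (Set.Ioc (g j) (g (j + 1))) := by
        refine Finset.sum_le_sum fun j _ => ?_
        rw [hκ _ _ (hg_mono (Nat.le_succ j)), ← ENNReal.ofReal_mul (sq_nonneg _)]
        apply ENNReal.ofReal_le_ofReal
        rw [← mul_pow]
        exact pow_le_pow_left₀ (norm_nonneg _) ((Gop j).le_opNorm _) 2
    _ = ∑ j ∈ Finset.range (n - 1), ∫⁻ u in Set.Ioc (g j) (g (j + 1)),
          ENNReal.ofReal
            (‖(Set.indicator {0} (fun _ => H0) u +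
                ∑ i : Fin k, Set.indicator (Set.Ioc (s i) (t i)) (fun _ => Hc i) u :
                HA →L[ℝ] HB)‖ ^ 2) ∂κ := by
        refine Finset.sum_congr rfl fun j hj => ?_
        rw [setLIntegral_congr_fun measurableSet_Ioc
          (fun u hu => by rw [hconst j hj u hu]),
          setLIntegral_const]
    _ = ∫⁻ u in ⋃ j ∈ Finset.range (n - 1), Set.Ioc (g j) (g (j + 1)),
          ENNReal.ofReal
            (‖(Set.indicator {0} (fun _ => H0) u +
                ∑ i : Fin k, Set.indicator (Set.Ioc (s i) (t i)) (fun _ => Hc i) u :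
                HA →L[ℝ] HB)‖ ^ 2) ∂κ :=
        (lintegral_biUnion_finset hdisj (fun _ _ => measurableSet_Ioc) _).symm
    _ ≤ ∫⁻ u in Set.Ioi (0 : ℝ≥0),
          ENNReal.ofReal
            (‖(Set.indicator {0} (fun _ => H0) u +
                ∑ i : Fin k, Set.indicator (Set.Ioc (s i) (t i)) (fun _ => Hc i) u :
                HA →L[ℝ] HB)‖ ^ 2) ∂κ := by
        refine lintegral_mono_set fun u hu => ?_
        simp only [Set.mem_iUnion, Set.mem_Ioc] at hu
        obtain ⟨j, _, h1, _⟩ := hu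
        exact lt_of_le_of_lt zero_le h1
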